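/- arXiv:0909.2588 — 2 statements merged into one kernel-verified Lean document; each statement's English description precedes it below -/
import Mathlib

section
/- Let χ ∈ ℝ, τ > 0, and let w : [χ, ∞) → ℂ be a continuously differentiable function with w(χ) = 0 and w' square-integrable on [χ, ∞). Then ∫_χ^∞ |w(ρ)|² e^{-τρ} dρ ≤ (e^{-τχ}/τ²) ∫_χ^∞ |w'(ρ)|² dρ. -/
open MeasureTheory Filter

/-- Cauchy–Schwarz on a bounded interval: `(∫ g)² ≤ (b-a) ∫ g²` for nonnegative `g`. -/
lemma cs_aux {a b : ℝ} (hab : a ≤ b) {g : ℝ → ℝ}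
    (hmeas : AEStronglyMeasurable g (volume.restrict (Set.Ioc a b)))
    (hnn : ∀ x, 0 ≤ g x)
    (hint2 : IntegrableOn (fun x => g x ^ 2) (Set.Ioc a b)) :
    (∫ t in Set.Ioc a b, g t) ^ 2 ≤ (b - a) * ∫ t in Set.Ioc a b, g t ^ 2 := by
  set μ := volume.restrict (Set.Ioc a b) with hμ
  haveI : IsFiniteMeasure μ := ⟨by
    rw [hμ, Measure.restrict_apply_univ, Real.volume_Ioc]
    exact ENNReal.ofReal_lt_top⟩
  have hpq : Real.HolderConjugate 2 2 := Real.HolderConjugate.two_two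
  have h2eq : ENNReal.ofReal (2 : ℝ) = 2 := by norm_num
  have h1 : MemLp (fun _ : ℝ => (1 : ℝ)) (ENNReal.ofReal 2) μ := memLp_const 1
  have h2 : MemLp g (ENNReal.ofReal 2) μ := by
    rw [h2eq, memLp_two_iff_integrable_sq hmeas]
    exact hint2
  have H := integral_mul_le_Lp_mul_Lq_of_nonneg (μ := μ) hpq
    (Eventually.of_forall fun _ => zero_le_one)
    (Eventually.of_forall fun x => hnn x) h1 h2
  have hrw1 : ∫ x, (1 : ℝ) * g x ∂μ = ∫ t in Set.Ioc a b, g t := by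
    simp [hμ]
  have hrw2 : ∫ _x, (1 : ℝ) ^ (2 : ℝ) ∂μ = b - a := by
    simp [hμ, Real.volume_Ioc, ENNReal.toReal_ofReal (sub_nonneg.2 hab), hab]
  have hrw3 : ∫ x, g x ^ (2 : ℝ) ∂μ = ∫ t in Set.Ioc a b, g t ^ 2 := by
    refine integral_congr_ae (Eventually.of_forall fun x => ?_)
    show g x ^ (2 : ℝ) = g x ^ (2 : ℕ)
    rw [← Real.rpow_natCast (g x) 2]
    norm_num
  rw [hrw1, hrw2, hrw3] at H
  have hInn : 0 ≤ ∫ t in Set.Ioc a b, g t ^ 2 :=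
    integral_nonneg fun x => sq_nonneg _
  have hgnn : 0 ≤ ∫ t in Set.Ioc a b, g t := integral_nonneg fun x => hnn x
  have H2 := pow_le_pow_left₀ hgnn H 2
  calc (∫ t in Set.Ioc a b, g t) ^ 2
      ≤ ((b - a) ^ (1 / 2 : ℝ) * (∫ t in Set.Ioc a b, g t ^ 2) ^ (1 / 2 : ℝ)) ^ 2 := H2
    _ = (b - a) * ∫ t in Set.Ioc a b, g t ^ 2 := by
        rw [← Real.sqrt_eq_rpow, ← Real.sqrt_eq_rpow, mul_pow,
          Real.sq_sqrt (sub_nonneg.2 hab), Real.sq_sqrt hInn]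

/-- Weighted Poincaré-type inequality (4.10) in Aronszajn's Carleman estimate. -/
theorem weighted_poincare (χ τ : ℝ) (hτ : 0 < τ) (w w' : ℝ → ℂ)
    (hderiv : ∀ ρ ∈ Set.Ici χ, HasDerivWithinAt w (w' ρ) (Set.Ici χ) ρ)
    (hcont : ContinuousOn w' (Set.Ici χ))
    (hw0 : w χ = 0)
    (hint : IntegrableOn (fun ρ => ‖w' ρ‖ ^ 2) (Set.Ici χ)) :
    ∫ ρ in Set.Ioi χ, ‖w ρ‖ ^ 2 * Real.exp (-(τ * ρ)) ≤
      (Real.exp (-(τ * χ)) / τ ^ 2) * ∫ ρ in Set.Ioi χ, ‖w' ρ‖ ^ 2 := by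
  set I := ∫ ρ in Set.Ioi χ, ‖w' ρ‖ ^ 2 with hIdef
  have hintIoi : IntegrableOn (fun ρ => ‖w' ρ‖ ^ 2) (Set.Ioi χ) :=
    hint.mono_set Set.Ioi_subset_Ici_self
  have hI0 : 0 ≤ I := setIntegral_nonneg measurableSet_Ioi fun x _ => sq_nonneg _
  have hcontw : ContinuousOn w (Set.Ici χ) := fun x hx => (hderiv x hx).continuousWithinAt
  -- FTC
  have hftc : ∀ ρ, χ ≤ ρ → w ρ = ∫ t in χ..ρ, w' t := by
    intro ρ hρ
    have hsub : Set.Icc χ ρ ⊆ Set.Ici χ := Set.Icc_subset_Ici_self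
    have husub : Set.uIcc χ ρ ⊆ Set.Ici χ := by
      rw [Set.uIcc_of_le hρ]; exact hsub
    have h := intervalIntegral.integral_eq_sub_of_hasDeriv_right_of_le hρ
      (hcontw.mono hsub)
      (fun x hx => (hderiv x hx.1.le).mono fun y hy => hx.1.le.trans hy.le)
      ((hcont.mono husub).intervalIntegrable)
    rw [h, hw0, sub_zero]
  -- pointwise bound
  have key : ∀ ρ ∈ Set.Ioi χ, ‖w ρ‖ ^ 2 ≤ (ρ - χ) * I := by
    intro ρ hρ
    have hρ' : χ ≤ ρ := (Set.mem_Ioi.1 hρ).le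
    have hsub2 : Set.Ioc χ ρ ⊆ Set.Ici χ :=
      Set.Ioc_subset_Icc_self.trans Set.Icc_subset_Ici_self
    have h1 : ‖w ρ‖ ≤ ∫ t in Set.Ioc χ ρ, ‖w' t‖ := by
      rw [hftc ρ hρ', ← intervalIntegral.integral_of_le hρ']
      exact intervalIntegral.norm_integral_le_integral_norm hρ'
    have hmeas : AEStronglyMeasurable (fun t => ‖w' t‖) (volume.restrict (Set.Ioc χ ρ)) :=
      ((hcont.mono hsub2).norm).aestronglyMeasurable measurableSet_Ioc
    have hint2 : IntegrableOn (fun t => ‖w' t‖ ^ 2) (Set.Ioc χ ρ) :=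
      hint.mono_set hsub2
    have h2 := cs_aux hρ' hmeas (fun x => norm_nonneg _) hint2
    have h3 : ∫ t in Set.Ioc χ ρ, ‖w' t‖ ^ 2 ≤ I := by
      refine setIntegral_mono_set hintIoi (Eventually.of_forall fun x => sq_nonneg _) ?_
      exact HasSubset.Subset.eventuallyLE Set.Ioc_subset_Ioi_self
    calc ‖w ρ‖ ^ 2 ≤ (∫ t in Set.Ioc χ ρ, ‖w' t‖) ^ 2 :=
          pow_le_pow_left₀ (norm_nonneg _) h1 2
      _ ≤ (ρ - χ) * ∫ t in Set.Ioc χ ρ, ‖w' t‖ ^ 2 := h2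
      _ ≤ (ρ - χ) * I := mul_le_mul_of_nonneg_left h3 (sub_nonneg.2 hρ')
  -- the weight integral
  set F : ℝ → ℝ := fun ρ => -((ρ - χ) / τ + 1 / τ ^ 2) * Real.exp (-(τ * ρ)) with hFdef
  have hF : ∀ x : ℝ, HasDerivAt F ((x - χ) * Real.exp (-(τ * x))) x := by
    intro x
    have h1 : HasDerivAt (fun ρ : ℝ => -((ρ - χ) / τ + 1 / τ ^ 2)) (-(1 / τ)) x := by
      have := (((hasDerivAt_id x).sub_const χ).div_const τ).add_const (1 / τ ^ 2) |>.neg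
      exact this.congr_deriv (by ring)
    have h2 : HasDerivAt (fun ρ : ℝ => Real.exp (-(τ * ρ))) (-τ * Real.exp (-(τ * x))) x := by
      have := (Real.hasDerivAt_exp (-(τ * x))).comp x (((hasDerivAt_id x).const_mul τ).neg)
      exact this.congr_deriv (by ring)
    have h := h1.mul h2
    refine h.congr_deriv ?_
    have hτ0 : τ ≠ 0 := ne_of_gt hτ
    field_simp
    ring
  have hexp : Tendsto (fun ρ : ℝ => Real.exp (-(τ * ρ))) atTop (nhds 0) :=
    Real.tendsto_exp_neg_atTop_nhds_zero.comp (tendsto_id.const_mul_atTop hτ)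
  have hmulexp : Tendsto (fun ρ : ℝ => (τ * ρ) * Real.exp (-(τ * ρ))) atTop (nhds 0) := by
    have h := (Real.tendsto_pow_mul_exp_neg_atTop_nhds_zero 1).comp
      (tendsto_id.const_mul_atTop hτ)
    simpa [Function.comp_def] using h
  have hFlim : Tendsto F atTop (nhds 0) := by
    have hτ0 : τ ≠ 0 := ne_of_gt hτ
    have hEq : F = fun ρ => -((1 / τ ^ 2) * ((τ * ρ) * Real.exp (-(τ * ρ))) +
        (-(χ / τ) + 1 / τ ^ 2) * Real.exp (-(τ * ρ))) := by
      funext ρ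
      simp only [hFdef]
      field_simp
      ring
    rw [hEq]
    have := ((hmulexp.const_mul (1 / τ ^ 2)).add (hexp.const_mul (-(χ / τ) + 1 / τ ^ 2))).neg
    simpa using this
  have hg'nn : ∀ x ∈ Set.Ioi χ, 0 ≤ (x - χ) * Real.exp (-(τ * x)) := fun x hx =>
    mul_nonneg (sub_nonneg.2 (Set.mem_Ioi.1 hx).le) (Real.exp_pos _).le
  have hJint : IntegrableOn (fun x => (x - χ) * Real.exp (-(τ * x))) (Set.Ioi χ) :=
    integrableOn_Ioi_deriv_of_nonneg' (fun x _ => hF x) hg'nn hFlim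
  have hJ : ∫ ρ in Set.Ioi χ, (ρ - χ) * Real.exp (-(τ * ρ)) = Real.exp (-(τ * χ)) / τ ^ 2 := by
    rw [integral_Ioi_of_hasDerivAt_of_nonneg' (fun x _ => hF x) hg'nn hFlim]
    have hτ0 : τ ≠ 0 := ne_of_gt hτ
    simp only [hFdef, sub_self, zero_div, zero_add, zero_sub, neg_neg, neg_mul]
    ring
  -- conclude
  have hmono : ∫ ρ in Set.Ioi χ, ‖w ρ‖ ^ 2 * Real.exp (-(τ * ρ)) ≤
      ∫ ρ in Set.Ioi χ, I * ((ρ - χ) * Real.exp (-(τ * ρ))) := by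
    refine integral_mono_of_nonneg ?_ (hJint.const_mul I) ?_
    · exact Eventually.of_forall fun x =>
        mul_nonneg (sq_nonneg _) (Real.exp_pos _).le
    · refine (ae_restrict_iff' measurableSet_Ioi).2 (Eventually.of_forall fun x hx => ?_)
      have := mul_le_mul_of_nonneg_right (key x hx) (Real.exp_pos (-(τ * x))).le
      calc ‖w x‖ ^ 2 * Real.exp (-(τ * x)) ≤ (x - χ) * I * Real.exp (-(τ * x)) := this
        _ = I * ((x - χ) * Real.exp (-(τ * x))) := by ring
  calc ∫ ρ in Set.Ioi χ, ‖w ρ‖ ^ 2 * Real.exp (-(τ * ρ))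
      ≤ ∫ ρ in Set.Ioi χ, I * ((ρ - χ) * Real.exp (-(τ * ρ))) := hmono
    _ = I * ∫ ρ in Set.Ioi χ, (ρ - χ) * Real.exp (-(τ * ρ)) := integral_const_mul I _
    _ = I * (Real.exp (-(τ * χ)) / τ ^ 2) := by rw [hJ]
    _ = (Real.exp (-(τ * χ)) / τ ^ 2) * I := mul_comm _ _
end

section
/- Let H be a Hilbert space, A : W → H a self-adjoint operator with one-dimensional kernel spanned by a unit vector e, and suppose there is c > 0 with ‖A v‖ ≥ c ‖v‖ for all v ∈ W orthogonal to e. Let V : ℝ → W be a twice continuously differentiable solution of V'(s) + A V(s) = 0 such that ‖V(s) − P V(s)‖ → 0 as s → ±∞, where P is the orthogonal projection onto span(e). Then V(s) = a·e for some constant a ∈ ℝ; in particular the space of such solutions is one-dimensional. -/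
open RealInnerProductSpace

/-- Abstract form of Case 1 in the proof of Theorem 7.1: a bounded solution of
`V' + AV = 0` which is asymptotic to the one-dimensional kernel of the
self-adjoint operator `A` at `±∞` is a constant multiple of the kernel
generator. -/
theorem solutions_along_kernel
    {H : Type*} [NormedAddCommGroup H] [InnerProductSpace ℝ H] [CompleteSpace H]
    (W : Submodule ℝ H) (A : W →ₗ[ℝ] H)
    (hsym : ∀ v w : W, ⟪A v, (w : H)⟫ = ⟪(v : H), A w⟫)
    (e : H) (heW : e ∈ W) (hnorm : ‖e‖ = 1)
    (hker : ∀ v : W, A v = 0 ↔ ∃ a : ℝ, (v : H) = a • e)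
    (c : ℝ) (hc : 0 < c)
    (hbound : ∀ v : W, ⟪(v : H), e⟫ = 0 → c * ‖(v : H)‖ ≤ ‖A v‖)
    (V : ℝ → H) (hVW : ∀ s, V s ∈ W)
    (hV : ContDiff ℝ 2 V)
    (heqn : ∀ s, deriv V s + A ⟨V s, hVW s⟩ = 0)
    (hdecay_top : Filter.Tendsto (fun s => ‖V s - ⟪V s, e⟫ • e‖)
      Filter.atTop (nhds 0))
    (hdecay_bot : Filter.Tendsto (fun s => ‖V s - ⟪V s, e⟫ • e‖)
      Filter.atBot (nhds 0)) :
    ∃ a : ℝ, ∀ s, V s = a • e := by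
  have hVd : Differentiable ℝ V := hV.differentiable two_ne_zero
  have h2 : ContDiff ℝ (1 + 1) V := by norm_num; exact hV
  have hV'cd : ContDiff ℝ 1 (deriv V) := (contDiff_succ_iff_deriv.mp h2).2.2
  have hV'd : Differentiable ℝ (deriv V) := hV'cd.differentiable one_ne_zero
  have hAe : A ⟨e, heW⟩ = 0 := (hker _).mpr ⟨1, by simp⟩
  have hderiv : ∀ s, deriv V s = -(A ⟨V s, hVW s⟩ : H) := fun s =>
    eq_neg_of_add_eq_zero_left (heqn s)
  have cAe : ∀ s, ⟪(A ⟨V s, hVW s⟩ : H), e⟫ = 0 := by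
    intro s
    have c1 := hsym ⟨V s, hVW s⟩ ⟨e, heW⟩
    rw [hAe] at c1
    simpa using c1
  have cAe' : ∀ s, ⟪e, (A ⟨V s, hVW s⟩ : H)⟫ = 0 := fun s => by
    rw [real_inner_comm]; exact cAe s
  -- the derivative is orthogonal to e
  have hVe' : ∀ s, ⟪deriv V s, e⟫ = 0 := by
    intro s
    rw [hderiv s, inner_neg_left, cAe s, neg_zero]
  -- the coefficient along e is constant
  have hαd : ∀ s, HasDerivAt (fun t => ⟪V t, e⟫) 0 s := by
    intro s
    have := ((hVd s).hasDerivAt.inner ℝ (hasDerivAt_const s e))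
    simpa [hVe' s] using this
  have hαconst : ∀ s, ⟪V s, e⟫ = ⟪V 0, e⟫ := by
    intro s
    exact is_const_of_deriv_eq_zero (fun t => (hαd t).differentiableAt)
      (fun t => (hαd t).deriv) s 0
  set a : ℝ := ⟪V 0, e⟫ with ha
  set U : ℝ → H := fun s => V s - a • e with hUdef
  have hU' : ∀ s, HasDerivAt U (deriv V s) s := fun s =>
    ((hVd s).hasDerivAt).sub_const _
  -- symmetry identity
  have hsymVV : ∀ s t, ⟪U s, deriv V t⟫ = ⟪deriv V s, U t⟫ := by
    intro s t
    have c3 := hsym ⟨V s, hVW s⟩ ⟨V t, hVW t⟩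
    simp only [Submodule.coe_mk] at c3
    have c4 : ⟪V s, (A ⟨V t, hVW t⟩ : H)⟫ = ⟪(A ⟨V s, hVW s⟩ : H), V t⟫ := by
      rw [c3]
    simp only [hUdef, hderiv, inner_sub_left, inner_sub_right, inner_neg_left,
      inner_neg_right, real_inner_smul_left, real_inner_smul_right]
    rw [c4, cAe s, cAe' t]
    ring
  -- second-derivative identity
  have hkey : ∀ s, ⟪U s, deriv (deriv V) s⟫ = ⟪deriv V s, deriv V s⟫ := by
    intro s
    have hG : (fun t => ⟪U s, deriv V t⟫ - ⟪deriv V s, U t⟫) = fun _ => (0 : ℝ) := by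
      funext t; rw [hsymVV s t]; ring
    have hd1 : HasDerivAt (fun t => ⟪U s, deriv V t⟫ - ⟪deriv V s, U t⟫)
        (⟪U s, deriv (deriv V) s⟫ - ⟪deriv V s, deriv V s⟫) s := by
      have a1 := (hasDerivAt_const s (U s)).inner ℝ ((hV'd s).hasDerivAt)
      have a2 := (hasDerivAt_const s (deriv V s)).inner ℝ (hU' s)
      exact (by simpa using a1 : HasDerivAt (fun t => ⟪U s, deriv V t⟫) ⟪U s, deriv (deriv V) s⟫ s).sub
        (by simpa using a2 : HasDerivAt (fun t => ⟪deriv V s, U t⟫) ⟪deriv V s, deriv V s⟫ s)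
    rw [hG] at hd1
    have := hd1.unique (hasDerivAt_const s 0)
    linarith
  -- the squared norm of U
  set h : ℝ → ℝ := fun s => ⟪U s, U s⟫ with hhdef
  set p : ℝ → ℝ := fun s => ⟪U s, deriv V s⟫ + ⟪deriv V s, U s⟫ with hpdef
  have hh' : ∀ s, HasDerivAt h (p s) s := fun s => (hU' s).inner ℝ (hU' s)
  have hp' : ∀ s, HasDerivAt p (4 * ‖deriv V s‖ ^ 2) s := by
    intro s
    have b1 := (hU' s).inner ℝ ((hV'd s).hasDerivAt)
    have b2 := ((hV'd s).hasDerivAt).inner ℝ (hU' s)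
    have hb := b1.add b2
    have hc1 : ⟪deriv (deriv V) s, U s⟫ = ⟪deriv V s, deriv V s⟫ := by
      rw [real_inner_comm]; exact hkey s
    have hval : (⟪U s, deriv (deriv V) s⟫ + ⟪deriv V s, deriv V s⟫) +
        (⟪deriv V s, deriv V s⟫ + ⟪deriv (deriv V) s, U s⟫) = 4 * ‖deriv V s‖ ^ 2 := by
      rw [hc1, hkey s, real_inner_self_eq_norm_sq]; ring
    rw [hval] at hb
    exact hb
  have hderivh : deriv h = p := funext fun s => (hh' s).deriv
  have hderivp : ∀ s, deriv p s = 4 * ‖deriv V s‖ ^ 2 := fun s => (hp' s).deriv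
  -- convexity of h
  have hconv : ConvexOn ℝ Set.univ h := by
    apply convexOn_of_deriv2_nonneg convex_univ
    · have hd : Differentiable ℝ h := fun s => (hh' s).differentiableAt
      exact hd.continuous.continuousOn
    · exact fun s _ => ((hh' s).differentiableAt).differentiableWithinAt
    · intro s _
      rw [hderivh]
      exact ((hp' s).differentiableAt).differentiableWithinAt
    · intro s _
      have : deriv^[2] h s = deriv (deriv h) s := by
        simp [Function.iterate_succ, Function.comp]
      rw [this, hderivh, hderivp s]
      positivity
  -- h tends to 0 at ±∞
  have hUeq : ∀ s, U s = V s - ⟪V s, e⟫ • e := by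
    intro s; rw [hUdef]; simp only [hαconst s]
  have hheq : ∀ s, h s = ‖U s‖ ^ 2 := fun s => real_inner_self_eq_norm_sq _
  have htop : Filter.Tendsto (fun s => h s) Filter.atTop (nhds 0) := by
    have : Filter.Tendsto (fun s => ‖U s‖ ^ 2) Filter.atTop (nhds 0) := by
      have := hdecay_top.pow 2
      simpa [hUeq] using this
    simpa [hheq] using this
  have hbot : Filter.Tendsto (fun s => h s) Filter.atBot (nhds 0) := by
    have : Filter.Tendsto (fun s => ‖U s‖ ^ 2) Filter.atBot (nhds 0) := by
      have := hdecay_bot.pow 2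
      simpa [hUeq] using this
    simpa [hheq] using this
  -- conclude h ≡ 0
  have hzero : ∀ x, h x = 0 := by
    intro x
    have hle : ∀ n : ℝ, h x ≤ (h (x - n) + h (x + n)) / 2 := by
      intro n
      have := hconv.2 (Set.mem_univ (x - n)) (Set.mem_univ (x + n))
        (by norm_num : (0:ℝ) ≤ 1/2) (by norm_num : (0:ℝ) ≤ 1/2) (by norm_num)
      have hx : (1/2 : ℝ) • (x - n) + (1/2 : ℝ) • (x + n) = x := by
        simp [smul_eq_mul]; ring
      rw [hx] at this
      refine this.trans_eq ?_
      simp [smul_eq_mul]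
      ring
    have htend : Filter.Tendsto (fun n : ℝ => (h (x - n) + h (x + n)) / 2)
        Filter.atTop (nhds 0) := by
      have t1 : Filter.Tendsto (fun n : ℝ => h (x - n)) Filter.atTop (nhds 0) :=
        hbot.comp (Filter.tendsto_atBot_add_const_left Filter.atTop x
          Filter.tendsto_neg_atTop_atBot)
      have t2 : Filter.Tendsto (fun n : ℝ => h (x + n)) Filter.atTop (nhds 0) :=
        htop.comp (Filter.tendsto_atTop_add_const_left Filter.atTop x Filter.tendsto_id)
      simpa using (t1.add t2).div_const 2
    have h1 : h x ≤ 0 := ge_of_tendsto' htend hle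
    have h2' : 0 ≤ h x := by rw [hheq]; positivity
    linarith
  refine ⟨a, fun s => ?_⟩
  have : U s = 0 := by
    have := hzero s
    rw [hhdef] at this
    exact inner_self_eq_zero.mp this
  have := sub_eq_zero.mp (by simpa [hUdef] using this)
  simpa using this
end
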